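/- Let X = {P_1,...,P_s} ⊆ P^n be a set of s distinct K-rational points, K of characteristic zero, and let 2 ≤ m ≤ n+1. Then the degree-k homogeneous component of Ω^m_{R_X/K} vanishes for all k ≥ 2r_X + m, where r_X is the regularity index of R_X. Consequently the Hilbert polynomial of Ω^m_{R_X/K} is 0 for m ≥ 2. -/

import Mathlib

open MvPolynomial

set_option maxHeartbeats 1000000
set_option synthInstance.maxHeartbeats 400000

noncomputable instance extAlgModK (K R M : Type) [CommRing K] [CommRing R] [Algebra K R]
    [AddCommGroup M] [Module R M] : Module K (ExteriorAlgebra R M) :=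
  Module.compHom _ (algebraMap K R)

/-- The homogeneous vanishing ideal of the `K`-rational point
`(1 : p_1 : ⋯ : p_n) ∈ ℙⁿ`. -/
noncomputable def pointIdeal (K : Type) [Field K] (n : ℕ) (p : Fin n → K) :
    Ideal (MvPolynomial (Fin (n + 1)) K) :=
  Ideal.span (Set.range fun i : Fin n =>
    MvPolynomial.X i.succ - MvPolynomial.C (p i) * MvPolynomial.X 0)

/-- The degree-`i` homogeneous component of the coordinate ring `R_X = S/I`. -/
noncomputable def coordPiece (K : Type) [Field K] (n : ℕ)
    (I : Ideal (MvPolynomial (Fin (n + 1)) K)) (i : ℕ) :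
    Submodule K (MvPolynomial (Fin (n + 1)) K ⧸ I) :=
  Submodule.span K {g | ∃ f : MvPolynomial (Fin (n + 1)) K,
    f.IsHomogeneous i ∧ g = Ideal.Quotient.mk I f}

/-- The homogeneous component of (total) degree `i` of `Ω^m_{R_X/K}`, realized
inside the exterior algebra over `R_X` of `Ω^1_{R_X/K}`. -/
noncomputable def omegaPiece (K : Type) [Field K] (n : ℕ)
    (I : Ideal (MvPolynomial (Fin (n + 1)) K)) (m i : ℕ) :
    Submodule K (ExteriorAlgebra (MvPolynomial (Fin (n + 1)) K ⧸ I)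
      (Ω[(MvPolynomial (Fin (n + 1)) K ⧸ I)⁄K])) :=
  Submodule.span K {w | ∃ (j : ℕ) (f : MvPolynomial (Fin (n + 1)) K)
      (σ : Fin m → Fin (n + 1)),
    i = j + m ∧ f.IsHomogeneous j ∧
    w = Ideal.Quotient.mk I f •
      ExteriorAlgebra.ιMulti (MvPolynomial (Fin (n + 1)) K ⧸ I) m
        (fun t => KaehlerDifferential.D K (MvPolynomial (Fin (n + 1)) K ⧸ I)
          (Ideal.Quotient.mk I (MvPolynomial.X (σ t))))}

section Aux
variable {K : Type} [Field K] {n : ℕ}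

/-- The affine coordinates `(1, pa)` of the point. -/
def ptv (pa : Fin n → K) : Fin (n + 1) → K := Fin.cons 1 pa

@[simp] lemma ptv_zero (pa : Fin n → K) : ptv pa 0 = 1 := Fin.cons_zero _ _
@[simp] lemma ptv_succ (pa : Fin n → K) (i : Fin n) : ptv pa i.succ = pa i := Fin.cons_succ _ _ _

/-- Substitution sending `X i ↦ pt i * X 0`. -/
noncomputable def ptSubst (pa : Fin n → K) : Fin (n + 1) → MvPolynomial (Fin (n + 1)) K :=
  fun i => C (ptv pa i) * X 0

@[simp] lemma ptSubst_apply (pa : Fin n → K) (i : Fin (n + 1)) :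
    ptSubst pa i = C (ptv pa i) * X 0 := rfl

lemma eval_eq_zero_of_mem_pointIdeal {pa : Fin n → K} {h : MvPolynomial (Fin (n+1)) K}
    (hh : h ∈ pointIdeal K n pa) : eval (ptv pa) h = 0 := by
  have hle : pointIdeal K n pa ≤ RingHom.ker (eval (ptv pa)) := by
    rw [pointIdeal, Ideal.span_le]
    rintro x ⟨i, rfl⟩
    simp [RingHom.mem_ker]
  exact hle hh

lemma aeval_isHomogeneous (pa : Fin n → K) {h : MvPolynomial (Fin (n+1)) K} {d : ℕ}
    (hh : h.IsHomogeneous d) :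
    aeval (ptSubst pa) h
      = C (eval (ptv pa) h) * X 0 ^ d := by
  conv_lhs => rw [h.as_sum]
  conv_rhs => rw [h.as_sum]
  rw [map_sum, map_sum, map_sum, Finset.sum_mul]
  refine Finset.sum_congr rfl fun v hv => ?_
  have hdv := hh (mem_support_iff.mp hv)
  have hsum : ∑ i ∈ v.support, v i = d := by
    rw [Finsupp.weight_apply] at hdv
    simpa [Finsupp.sum] using hdv
  rw [aeval_monomial, eval_monomial, Finsupp.prod, Finsupp.prod]
  simp only [ptSubst_apply, mul_pow, Finset.prod_mul_distrib, Finset.prod_pow_eq_pow_sum, hsum,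
    algebraMap_eq, map_mul, map_prod, map_pow]
  ring

lemma sub_aeval_mem (pa : Fin n → K) (h : MvPolynomial (Fin (n+1)) K) :
    h - aeval (ptSubst pa) h ∈ pointIdeal K n pa := by
  induction h using MvPolynomial.induction_on with
  | C c => simp [algebraMap_eq]
  | add p q hp hq =>
      have heq : p + q - aeval (ptSubst pa) (p + q)
          = (p - aeval (ptSubst pa) p)
            + (q - aeval (ptSubst pa) q) := by
        rw [map_add]; ring
      rw [heq]; exact add_mem hp hq
  | mul_X q i hq =>
      have key : X i - C (ptv pa i) * X 0 ∈ pointIdeal K n pa := by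
        refine Fin.cases ?_ ?_ i
        · simp
        · intro i'
          rw [ptv_succ, pointIdeal]
          exact Ideal.subset_span ⟨i', rfl⟩
      have heq : q * X i - aeval (ptSubst pa) (q * X i)
          = (q - aeval (ptSubst pa) q) * (C (ptv pa i) * X 0)
            + q * (X i - C (ptv pa i) * X 0) := by
        rw [map_mul, aeval_X, ptSubst_apply]; ring
      rw [heq]
      exact add_mem (Ideal.mul_mem_right _ _ hq) (Ideal.mul_mem_left _ _ key)

lemma mem_pointIdeal_of_eval_eq_zero (pa : Fin n → K) {h : MvPolynomial (Fin (n+1)) K} {d : ℕ}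
    (hh : h.IsHomogeneous d) (he : eval (ptv pa) h = 0) :
    h ∈ pointIdeal K n pa := by
  have h2 := sub_aeval_mem pa h
  rwa [aeval_isHomogeneous pa hh, he, map_zero, zero_mul, sub_zero] at h2

open ExteriorAlgebra in
lemma ext_aux {R M : Type*} [CommRing R] [AddCommGroup M] [Module R M]
    (g c₁ c₂ : R) (x y z : M) (hx : g • x = c₁ • (g • z)) (hy : g • y = c₂ • (g • z))
    (T : ExteriorAlgebra R M) :
    g • (ι R x * (ι R y * T)) = 0 := by
  have hy' : g • (ι R y * T) = c₂ • (g • (ι R z * T)) := by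
    rw [← smul_mul_assoc, ← map_smul, hy, map_smul, map_smul, smul_mul_assoc, smul_mul_assoc]
  calc g • (ι R x * (ι R y * T))
      = (g • ι R x) * (ι R y * T) := by rw [smul_mul_assoc]
    _ = ι R (g • x) * (ι R y * T) := by rw [map_smul]
    _ = ι R (c₁ • (g • z)) * (ι R y * T) := by rw [hx]
    _ = (c₁ • (g • ι R z)) * (ι R y * T) := by rw [map_smul, map_smul]
    _ = c₁ • (ι R z * (g • (ι R y * T))) := by rw [smul_mul_assoc, smul_mul_assoc, mul_smul_comm]
    _ = c₁ • (ι R z * (c₂ • (g • (ι R z * T)))) := by rw [hy']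
    _ = c₁ • (c₂ • (g • (ι R z * (ι R z * T)))) := by rw [mul_smul_comm, mul_smul_comm]
    _ = c₁ • (c₂ • (g • ((ι R z * ι R z) * T))) := by rw [mul_assoc]
    _ = 0 := by rw [ι_sq_zero, zero_mul, smul_zero, smul_zero, smul_zero]

end Aux

section Main

open ExteriorAlgebra

theorem omega_piece_vanishes_reduced_points (K : Type) [Field K] [CharZero K]
    (n s : ℕ) (p : Fin s → Fin n → K) (hp : Function.Injective p)
    (I : Ideal (MvPolynomial (Fin (n + 1)) K))
    (hIdef : I = ⨅ j : Fin s, pointIdeal K n (p j))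
    (r : ℕ) (hr : ∀ i : ℕ, r ≤ i → Module.finrank K (coordPiece K n I i) = s)
    (m : ℕ) (hm : 2 ≤ m) (hmn : m ≤ n + 1) :
    ∀ k : ℕ, 2 * r + m ≤ k → omegaPiece K n I m k = ⊥ := by
  classical
  obtain ⟨m', rfl⟩ : ∃ m', m = m' + 2 := ⟨m - 2, by omega⟩
  -- evaluation kills I
  have hIle : ∀ (a : Fin s), ∀ h ∈ I, eval (ptv (p a)) h = 0 := by
    intro a h hh
    refine eval_eq_zero_of_mem_pointIdeal ?_
    rw [hIdef] at hh
    exact Ideal.mem_iInf.mp hh a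
  have hmemI : ∀ {h : MvPolynomial (Fin (n+1)) K} {d : ℕ}, h.IsHomogeneous d →
      (∀ a, eval (ptv (p a)) h = 0) → h ∈ I := by
    intro h d hh he
    rw [hIdef, Ideal.mem_iInf]
    intro a
    exact mem_pointIdeal_of_eval_eq_zero (p a) hh (he a)
  let evq : Fin s → (MvPolynomial (Fin (n+1)) K ⧸ I) →+* K :=
    fun a => Ideal.Quotient.lift I (eval (ptv (p a))) (hIle a)
  have evq_mk : ∀ (a : Fin s) (h : MvPolynomial (Fin (n+1)) K),
      evq a (Ideal.Quotient.mk I h) = eval (ptv (p a)) h := fun a h =>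
    Ideal.Quotient.lift_mk I _ _
  -- the separators
  have hcoord : coordPiece K n I r = Submodule.map (Ideal.Quotient.mkₐ K I).toLinearMap
      (homogeneousSubmodule (Fin (n+1)) K r) := by
    rw [coordPiece]
    have hset : {g | ∃ f : MvPolynomial (Fin (n + 1)) K,
        f.IsHomogeneous r ∧ g = Ideal.Quotient.mk I f}
        = (Ideal.Quotient.mkₐ K I).toLinearMap ''
          (homogeneousSubmodule (Fin (n+1)) K r : Set _) := by
      ext g
      simp only [Set.mem_setOf_eq, Set.mem_image, SetLike.mem_coe,
        mem_homogeneousSubmodule, AlgHom.toLinearMap_apply, Ideal.Quotient.mkₐ_eq_mk]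
      exact ⟨fun ⟨f, h1, h2⟩ => ⟨f, h1, h2.symm⟩, fun ⟨f, h1, h2⟩ => ⟨f, h1, h2.symm⟩⟩
    rw [hset, Submodule.span_image, Submodule.span_eq]
  have hsep : ∀ a : Fin s, ∃ f : MvPolynomial (Fin (n+1)) K, f.IsHomogeneous r ∧
      ∀ b, eval (ptv (p b)) f = if b = a then 1 else 0 := by
    intro a
    let Φ : (coordPiece K n I r) →ₗ[K] (Fin s → K) :=
      { toFun := fun x b => evq b x.1
        map_add' := fun x y => by funext b; exact map_add (evq b) x.1 y.1
        map_smul' := fun c x => by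
          funext b
          show evq b (c • x.1) = c * evq b x.1
          obtain ⟨y, hy⟩ := Ideal.Quotient.mk_surjective (x.1 :)
          rw [← hy,
            show c • Ideal.Quotient.mk I y = Ideal.Quotient.mk I (C c * y) from by
              rw [← smul_eq_C_mul]; rfl,
            evq_mk, evq_mk, eval_mul, eval_C] }
    have hΦ_apply : ∀ (x : coordPiece K n I r) (b : Fin s), Φ x b = evq b x.1 :=
      fun x b => rfl
    have hinjΦ : Function.Injective Φ := by
      rw [injective_iff_map_eq_zero]
      intro x hx
      obtain ⟨h, hh, hmk⟩ := hcoord.le x.2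
      simp only [AlgHom.toLinearMap_apply, Ideal.Quotient.mkₐ_eq_mk] at hmk
      have hhI : h ∈ I := by
        refine hmemI ((mem_homogeneousSubmodule _ _).mp hh) (fun b => ?_)
        rw [← evq_mk b h, hmk]
        exact congrFun hx b
      have hx1 : x.1 = 0 := by
        rw [← hmk]
        simpa [Ideal.Quotient.eq_zero_iff_mem] using hhI
      exact Subtype.ext hx1
    haveI : FiniteDimensional K (coordPiece K n I r) :=
      FiniteDimensional.of_injective Φ hinjΦ
    have hsurj : Function.Surjective Φ :=
      (LinearMap.injective_iff_surjective_of_finrank_eq_finrank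
        (by rw [hr r le_rfl, Module.finrank_fin_fun])).mp hinjΦ
    obtain ⟨x, hx⟩ := hsurj (Pi.single a 1)
    obtain ⟨f, hf, hmk⟩ := hcoord.le x.2
    simp only [AlgHom.toLinearMap_apply, Ideal.Quotient.mkₐ_eq_mk] at hmk
    refine ⟨f, (mem_homogeneousSubmodule _ _).mp hf, fun b => ?_⟩
    have hb : evq b x.1 = (Pi.single a 1 : Fin s → K) b := by
      have := congrFun hx b; exact this
    rw [← evq_mk b f, hmk, hb, Pi.single_apply]
  choose fa hfa1 hfa2 using hsep
  -- the key relation:  (f_a)² dx_i = pt_i · (f_a)² dx_0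
  have hrel : ∀ (a : Fin s) (i : Fin (n+1)),
      (Ideal.Quotient.mk I (fa a) * Ideal.Quotient.mk I (fa a)) •
        (KaehlerDifferential.D K (MvPolynomial (Fin (n+1)) K ⧸ I)) (Ideal.Quotient.mk I (X i))
      = algebraMap K (MvPolynomial (Fin (n+1)) K ⧸ I) (ptv (p a) i) •
        ((Ideal.Quotient.mk I (fa a) * Ideal.Quotient.mk I (fa a)) •
          (KaehlerDifferential.D K (MvPolynomial (Fin (n+1)) K ⧸ I))
            (Ideal.Quotient.mk I (X 0))) := by
    intro a i
    induction i using Fin.cases with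
    | zero => rw [ptv_zero, map_one]; exact (one_smul (MvPolynomial (Fin (n+1)) K ⧸ I)
        (_ : Ω[(MvPolynomial (Fin (n + 1)) K ⧸ I)⁄K])).symm
    | succ i' =>
      rw [ptv_succ]
      have hfI : fa a * (X i'.succ - C (p a i') * X 0) ∈ I := by
        rw [hIdef, Ideal.mem_iInf]
        intro b
        by_cases hba : b = a
        · subst hba
          refine Ideal.mul_mem_left _ _ ?_
          rw [pointIdeal]
          exact Ideal.subset_span ⟨i', rfl⟩
        · refine Ideal.mul_mem_right _ _ ?_
          refine mem_pointIdeal_of_eval_eq_zero (p b) (hfa1 a) ?_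
          rw [hfa2 a b, if_neg hba]
      set f := Ideal.Quotient.mk I (fa a) with hfdef
      set u := Ideal.Quotient.mk I (X i'.succ : MvPolynomial (Fin (n+1)) K) with hudef
      set z := Ideal.Quotient.mk I (X 0 : MvPolynomial (Fin (n+1)) K) with hzdef
      set c := algebraMap K (MvPolynomial (Fin (n+1)) K ⧸ I) (p a i') with hcdef
      set Dp := KaehlerDifferential.D K (MvPolynomial (Fin (n+1)) K ⧸ I) with hDdef
      have h0 : f * u = c * (f * z) := by
        have hz0 := Ideal.Quotient.eq_zero_iff_mem.mpr hfI
        rw [map_mul, map_sub, map_mul,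
          show (C (p a i') : MvPolynomial (Fin (n+1)) K) = algebraMap K _ (p a i') from rfl,
          Ideal.Quotient.mk_algebraMap] at hz0
        rw [← hfdef, ← hudef, ← hzdef, ← hcdef] at hz0
        linear_combination hz0
      have hD := congrArg Dp h0
      rw [Derivation.leibniz, Derivation.leibniz, Derivation.leibniz,
        Derivation.map_algebraMap, smul_zero, add_zero] at hD
      calc (f * f) • Dp u
          = f • (f • Dp u + u • Dp f) - (f * u) • Dp f := by
            rw [smul_add f (f • Dp u) (u • Dp f), smul_smul f f (Dp u), smul_smul f u (Dp f), add_sub_cancel_right]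
        _ = f • (c • (f • Dp z + z • Dp f)) - (f * u) • Dp f := by rw [hD]
        _ = c • ((f * f) • Dp z) + (c * (f * z)) • Dp f - (f * u) • Dp f := by
            rw [smul_smul f c (f • Dp z + z • Dp f), mul_comm f c, ← smul_smul c f (f • Dp z + z • Dp f), smul_add f (f • Dp z) (z • Dp f), smul_smul f f (Dp z), smul_smul f z (Dp f), smul_add c ((f * f) • Dp z) ((f * z) • Dp f),
              smul_smul c (f * z) (Dp f)]
        _ = c • ((f * f) • Dp z) := by rw [← h0, add_sub_cancel_right]
  -- now the main computation
  intro k hk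
  rw [omegaPiece, Submodule.span_eq_bot]
  rintro w ⟨j, g, σ, hkj, hgh, rfl⟩
  have hj : 2 * r ≤ j := by omega
  set G : MvPolynomial (Fin (n+1)) K :=
    ∑ a : Fin s, C (eval (ptv (p a)) g) * (X 0 ^ (j - 2*r) * (fa a * fa a)) with hGdef
  have hGhom : G.IsHomogeneous j := by
    refine MvPolynomial.IsHomogeneous.sum _ _ _ (fun a _ => ?_)
    have h1 := (isHomogeneous_C _ (eval (ptv (p a)) g)).mul
      ((isHomogeneous_X_pow 0 (j - 2*r)).mul ((hfa1 a).mul (hfa1 a)))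
    have he : 0 + ((j - 2*r) + (r + r)) = j := by omega
    rwa [he] at h1
  have hGg : Ideal.Quotient.mk I g = Ideal.Quotient.mk I G := by
    refine Ideal.Quotient.eq.mpr (hmemI (hgh.sub hGhom) (fun b => ?_))
    have hterm : ∀ a : Fin s, eval (ptv (p b))
        (C (eval (ptv (p a)) g) * (X 0 ^ (j - 2*r) * (fa a * fa a)))
        = if b = a then eval (ptv (p b)) g else 0 := by
      intro a
      rw [eval_mul, eval_C, eval_mul, eval_pow, eval_X, ptv_zero, one_pow, one_mul,
        eval_mul, hfa2]
      by_cases hba : b = a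
      · subst hba; rw [if_pos rfl, if_pos rfl]; ring
      · rw [if_neg hba, if_neg hba]; ring
    rw [map_sub, hGdef, map_sum, sub_eq_zero]
    simp only [hterm]
    rw [Finset.sum_ite_eq, if_pos (Finset.mem_univ b)]
  rw [hGg, hGdef, map_sum]; refine (Finset.sum_smul (R := MvPolynomial (Fin (n+1)) K ⧸ I)
    (M := ExteriorAlgebra (MvPolynomial (Fin (n+1)) K ⧸ I)
      Ω[(MvPolynomial (Fin (n + 1)) K ⧸ I)⁄K])).trans ?_
  refine Finset.sum_eq_zero (fun a _ => ?_)
  rw [map_mul, map_mul, map_mul, mul_smul, mul_smul]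
  simp only [ExteriorAlgebra.ιMulti_apply, List.ofFn_succ, List.prod_cons]
  rw [ext_aux _ _ _ _ _ _ (hrel a _) (hrel a _) _, smul_zero, smul_zero]

end Main
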